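/- Let a > 0 and let X : ℝ² → ℝ³ be defined by X(u,v) = ( [a·cos u·sin(a v)·cosh(a u)·cosh v − a·sin u·cos(a v)·sinh(a u)·sinh v + cos u·cos(a v)·cosh(a u)·sinh v + sin u·sin(a v)·sinh(a u)·cosh v]/(a²+1) + cos u·cosh v , [a·cos u·cos(a v)·sinh(a u)·sinh v + a·sin u·sin(a v)·cosh(a u)·cosh v + sin u·cos(a v)·cosh(a u)·sinh v − cos u·sin(a v)·sinh(a u)·cosh v]/(a²+1) + sin u·cosh v , −sin(a v)·sinh(a u)/a ). Then for every u ∈ ℝ: (i) X(u,0) = (cos u, sin u, 0); and (ii) the vector V(u) = (−sinh(a u)·cos u, −sinh(a u)·sin u, cosh(a u)) satisfies ⟨V(u),V(u)⟩_L = −1, ⟨V(u), ∂X/∂u (u,0)⟩_L = 0 and ⟨V(u), ∂X/∂v (u,0)⟩_L = 0. -/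

import Mathlib

open Real

/-- Lorentzian inner product on ℝ³: ⟨p,q⟩ = p₁q₁ + p₂q₂ − p₃q₃. -/
noncomputable def lorentz (p q : ℝ × ℝ × ℝ) : ℝ :=
  p.1 * q.1 + p.2.1 * q.2.1 - p.2.2 * q.2.2

/-- First coordinate of the bending helicoid with timelike axis. -/
noncomputable def X1 (a u v : ℝ) : ℝ :=
  (a * cos u * sin (a*v) * cosh (a*u) * cosh v
   - a * sin u * cos (a*v) * sinh (a*u) * sinh v
   + cos u * cos (a*v) * cosh (a*u) * sinh v
   + sin u * sin (a*v) * sinh (a*u) * cosh v) / (a^2 + 1)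
  + cos u * cosh v

/-- Second coordinate of the bending helicoid with timelike axis. -/
noncomputable def X2 (a u v : ℝ) : ℝ :=
  (a * cos u * cos (a*v) * sinh (a*u) * sinh v
   + a * sin u * sin (a*v) * cosh (a*u) * cosh v
   + sin u * cos (a*v) * cosh (a*u) * sinh v
   - cos u * sin (a*v) * sinh (a*u) * cosh v) / (a^2 + 1)
  + sin u * cosh v

/-- Third coordinate of the bending helicoid with timelike axis. -/
noncomputable def X3 (a u v : ℝ) : ℝ :=
  - (sin (a*v) * sinh (a*u)) / a

/-- Partial derivative of X with respect to u. -/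
noncomputable def Xu (a u v : ℝ) : ℝ × ℝ × ℝ :=
  (deriv (fun s => X1 a s v) u, deriv (fun s => X2 a s v) u, deriv (fun s => X3 a s v) u)

/-- Partial derivative of X with respect to v. -/
noncomputable def Xv (a u v : ℝ) : ℝ × ℝ × ℝ :=
  (deriv (fun t => X1 a u t) v, deriv (fun t => X2 a u t) v, deriv (fun t => X3 a u t) v)

/-- The Björling data normal field. -/
noncomputable def V (a u : ℝ) : ℝ × ℝ × ℝ :=
  (- sinh (a*u) * cos u, - sinh (a*u) * sin u, cosh (a*u))

/-- The bending helicoid with timelike axis contains the circle (cos u, sin u, 0) and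
V(u) is a unit timelike vector field normal to the surface along it. -/
theorem bending_helicoid_timelike_bjorling (a : ℝ) (ha : 0 < a) (u : ℝ) :
    (X1 a u 0, X2 a u 0, X3 a u 0) = (cos u, sin u, 0) ∧
    lorentz (V a u) (V a u) = -1 ∧
    lorentz (V a u) (Xu a u 0) = 0 ∧
    lorentz (V a u) (Xv a u 0) = 0 := by

  have hA : (a:ℝ)^2 + 1 ≠ 0 := by positivity
  have hlin : HasDerivAt (fun t : ℝ => a * t) a 0 := by
    simpa using (hasDerivAt_id (0:ℝ)).const_mul a
  have hs : HasDerivAt (fun t : ℝ => sin (a*t)) a 0 := by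
    simpa [Function.comp_def] using (Real.hasDerivAt_sin (a*0)).comp 0 hlin
  have hc : HasDerivAt (fun t : ℝ => cos (a*t)) 0 0 := by
    simpa [Function.comp_def] using (Real.hasDerivAt_cos (a*0)).comp 0 hlin
  have hsh : HasDerivAt (fun t : ℝ => Real.sinh t) 1 0 := by
    simpa using Real.hasDerivAt_sinh 0
  have hch : HasDerivAt (fun t : ℝ => Real.cosh t) 0 0 := by
    simpa using Real.hasDerivAt_cosh 0
  have H1 : deriv (fun t => X1 a u t) 0 = cos u * cosh (a*u) := by
    have h := (((((((hs.const_mul (a*cos u)).mul_const (Real.cosh (a*u))).mul hch).sub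
        (((hc.const_mul (a*sin u)).mul_const (Real.sinh (a*u))).mul hsh)).add
        (((hc.const_mul (cos u)).mul_const (Real.cosh (a*u))).mul hsh)).add
        (((hs.const_mul (sin u)).mul_const (Real.sinh (a*u))).mul hch)).div_const (a^2+1)).add
        (hch.const_mul (cos u))
    rw [show (fun t => X1 a u t) = _ from rfl]
    unfold X1
    erw [h.deriv]
    simp
    field_simp
    ring
  have H2 : deriv (fun t => X2 a u t) 0 = sin u * cosh (a*u) := by
    have h := (((((((hc.const_mul (a*cos u)).mul_const (Real.sinh (a*u))).mul hsh).add
        (((hs.const_mul (a*sin u)).mul_const (Real.cosh (a*u))).mul hch)).add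
        (((hc.const_mul (sin u)).mul_const (Real.cosh (a*u))).mul hsh)).sub
        (((hs.const_mul (cos u)).mul_const (Real.sinh (a*u))).mul hch)).div_const (a^2+1)).add
        (hch.const_mul (sin u))
    unfold X2
    erw [h.deriv]
    simp
    field_simp
    ring
  have H3 : deriv (fun t => X3 a u t) 0 = - Real.sinh (a*u) := by
    have h := ((hs.mul_const (Real.sinh (a*u))).neg).div_const a
    unfold X3
    erw [h.deriv]
    field_simp
  refine ⟨by simp [X1, X2, X3], ?_, ?_, ?_⟩
  · have h1 := Real.cosh_sq_sub_sinh_sq (a*u)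
    have h2 := Real.sin_sq_add_cos_sq u
    simp only [lorentz, V]
    nlinarith [Real.sinh_sq (a*u)]
  · have e1 : (fun s => X1 a s 0) = fun s => cos s := by
      funext s; simp [X1]
    have e2 : (fun s => X2 a s 0) = fun s => sin s := by
      funext s; simp [X2]
    have e3 : (fun s => X3 a s 0) = fun _ => (0:ℝ) := by
      funext s; simp [X3]
    simp [Xu, e1, e2, e3, lorentz, V, Real.deriv_cos]
    ring
  · simp only [Xv, H1, H2, H3, lorentz, V]
    linear_combination (-(Real.sinh (a*u) * Real.cosh (a*u))) * Real.sin_sq_add_cos_sq u
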